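/- Let a(n, j) denote the number of link patterns of n strands with exposure number j. Then for every n ≥ 2 and every j with 1 ≤ j ≤ n, a(n, j) = Σ_{k = max(1, j−1)}^{n−1} a(n−1, k); that is, the exposure-number statistics satisfy the Catalan-tree succession rule (k) → (2)(3)⋯(k+1). -/

import Mathlib

/-- A link pattern of `n` strands: a fixed-point-free involution of `{0, …, 2n-1}`
that is noncrossing. -/
def IsLinkPattern (n : ℕ) (μ : Fin (2*n) → Fin (2*n)) : Prop :=
  (∀ i, μ (μ i) = i) ∧ (∀ i, μ i ≠ i) ∧
  (∀ a b c d : Fin (2*n), a < b → b < c → c < d → μ a = c → μ b = d → False)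

/-- The exposure number of `μ`: the number of outermost links `(a, b)` (pairs with
`a < b`, `μ a = b`, such that there is no link `(c, d)` with `c < a` and `b < d`). -/
noncomputable def exposure (n : ℕ) (μ : Fin (2*n) → Fin (2*n)) : ℕ :=
  Nat.card {p : Fin (2*n) × Fin (2*n) //
    p.1 < p.2 ∧ μ p.1 = p.2 ∧ ∀ c d : Fin (2*n), c < p.1 → p.2 < d → μ c ≠ d}

/-- `a n j`: the number of link patterns of `n` strands with exposure number `j`. -/
noncomputable def exposureCount (n j : ℕ) : ℕ :=
  Nat.card {μ : Fin (2*n) → Fin (2*n) // IsLinkPattern n μ ∧ exposure n μ = j}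

namespace LPx

/-- start `a` of an outermost link. -/
def Out (n : ℕ) (μ : Fin (2*n) → Fin (2*n)) (a : Fin (2*n)) : Prop :=
  a < μ a ∧ ∀ c d : Fin (2*n), c < a → μ a < d → μ c ≠ d

lemma exposure_eqic (n : ℕ) (μ : Fin (2*n) → Fin (2*n)) :
    exposure n μ = Nat.card {a : Fin (2*n) // Out n μ a} := by
  apply Nat.card_congr
  refine ⟨fun q => ⟨q.1.1, ?_⟩, fun a => ⟨(a.1, μ a.1), ?_⟩, ?_, ?_⟩
  · obtain ⟨h1, h2, h3⟩ := q.2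
    exact ⟨h2 ▸ h1, h2 ▸ h3⟩
  · exact ⟨a.2.1, rfl, a.2.2⟩
  · rintro ⟨⟨a, b⟩, h1, h2, h3⟩
    exact Subtype.ext (Prod.ext rfl h2)
  · rintro ⟨a, h⟩
    rfl

variable {n : ℕ}

def liftF (p : ℕ) (y : Fin (2*(n-1))) : Fin (2*n) :=
  if y.val < p then ⟨y.val, by omega⟩ else ⟨y.val + 1, by omega⟩

def dropF (hn : 2 ≤ n) (p : ℕ) (x : Fin (2*n)) : Fin (2*(n-1)) :=
  ⟨min (if x.val < p then x.val else x.val - 1) (2*n - 3), by omega⟩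

lemma liftF_val_lt {p : ℕ} {y : Fin (2*(n-1))} (h : y.val < p) : (liftF p y : Fin (2*n)).val = y.val := by
  simp [liftF, h]

lemma liftF_val_ge {p : ℕ} {y : Fin (2*(n-1))} (h : ¬ y.val < p) : (liftF p y : Fin (2*n)).val = y.val + 1 := by
  simp [liftF, h]

lemma liftF_le {p : ℕ} (y : Fin (2*(n-1))) : (liftF p y : Fin (2*n)).val ≤ 2*n - 2 := by
  have := y.isLt
  by_cases h : y.val < p
  · rw [liftF_val_lt h]; omega
  · rw [liftF_val_ge h]; omega

lemma liftF_ne_p {p : ℕ} (y : Fin (2*(n-1))) : (liftF p y : Fin (2*n)).val ≠ p := by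
  by_cases h : y.val < p
  · rw [liftF_val_lt h]; omega
  · rw [liftF_val_ge h]; omega

lemma liftF_lt_iff {p : ℕ} (y z : Fin (2*(n-1))) :
    (liftF p y : Fin (2*n)) < liftF p z ↔ y < z := by
  rw [Fin.lt_def, Fin.lt_def]
  by_cases h1 : y.val < p <;> by_cases h2 : z.val < p <;>
    simp [liftF_val_lt, liftF_val_ge, h1, h2] <;> omega

lemma dropF_val_lt (hn : 2 ≤ n) {p : ℕ} {x : Fin (2*n)} (h : x.val < p) (h2 : p ≤ 2*n - 2) :
    (dropF hn p x).val = x.val := by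
  simp only [dropF, if_pos h]
  omega

lemma dropF_val_ge (hn : 2 ≤ n) {p : ℕ} {x : Fin (2*n)} (h : ¬ x.val < p) (h2 : x.val ≤ 2*n - 2) :
    (dropF hn p x).val = x.val - 1 := by
  simp only [dropF, if_neg h]
  omega

lemma dropF_liftF (hn : 2 ≤ n) {p : ℕ} (hp : p ≤ 2*n - 2) (y : Fin (2*(n-1))) :
    dropF hn p (liftF p y) = y := by
  apply Fin.ext
  have := y.isLt
  by_cases h : y.val < p
  · rw [dropF_val_lt hn (by rw [liftF_val_lt h]; omega) hp, liftF_val_lt h]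
  · rw [dropF_val_ge hn (by rw [liftF_val_ge h]; omega) (by rw [liftF_val_ge h]; omega),
      liftF_val_ge h]
    omega

lemma liftF_dropF (hn : 2 ≤ n) {p : ℕ} (hp : p ≤ 2*n - 2) (x : Fin (2*n))
    (h1 : x.val ≠ p) (h2 : x.val ≠ 2*n - 1) :
    liftF p (dropF hn p x) = x := by
  apply Fin.ext
  have := x.isLt
  by_cases h : x.val < p
  · rw [liftF_val_lt (by rw [dropF_val_lt hn h hp]; omega), dropF_val_lt hn h hp]
  · rw [liftF_val_ge (by rw [dropF_val_ge hn h (by omega)]; omega), dropF_val_ge hn h (by omega)]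
    omega

end LPx

namespace LPx
variable {n : ℕ}

def endF (hn : 2 ≤ n) : Fin (2*n) := ⟨2*n - 1, by omega⟩

def insF (hn : 2 ≤ n) (p : ℕ) (hp : p ≤ 2*n - 2) (μ' : Fin (2*(n-1)) → Fin (2*(n-1))) :
    Fin (2*n) → Fin (2*n) :=
  fun x => if x.val = p then endF hn
    else if x.val = 2*n - 1 then ⟨p, by omega⟩
    else liftF p (μ' (dropF hn p x))

def delF (hn : 2 ≤ n) (μ : Fin (2*n) → Fin (2*n)) : Fin (2*(n-1)) → Fin (2*(n-1)) :=
  fun y => dropF hn (μ (endF hn)).val (μ (liftF (μ (endF hn)).val y))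

lemma insF_p (hn : 2 ≤ n) {p : ℕ} (hp : p ≤ 2*n - 2) (μ' : Fin (2*(n-1)) → Fin (2*(n-1)))
    {x : Fin (2*n)} (h : x.val = p) : insF hn p hp μ' x = endF hn := by
  simp [insF, h]

lemma insF_end (hn : 2 ≤ n) {p : ℕ} (hp : p ≤ 2*n - 2) (μ' : Fin (2*(n-1)) → Fin (2*(n-1)))
    {x : Fin (2*n)} (h : x.val = 2*n - 1) : insF hn p hp μ' x = ⟨p, by omega⟩ := by
  have : ¬ x.val = p := by omega
  simp only [insF, if_neg this, if_pos h]

lemma insF_other (hn : 2 ≤ n) {p : ℕ} (hp : p ≤ 2*n - 2) (μ' : Fin (2*(n-1)) → Fin (2*(n-1)))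
    {x : Fin (2*n)} (h1 : x.val ≠ p) (h2 : x.val ≠ 2*n - 1) :
    insF hn p hp μ' x = liftF p (μ' (dropF hn p x)) := by
  simp [insF, h1, h2]

lemma insF_liftF (hn : 2 ≤ n) {p : ℕ} (hp : p ≤ 2*n - 2) (μ' : Fin (2*(n-1)) → Fin (2*(n-1)))
    (y : Fin (2*(n-1))) : insF hn p hp μ' (liftF p y) = liftF p (μ' y) := by
  rw [insF_other hn hp μ' (liftF_ne_p y) (by have := liftF_le (p := p) y; omega),
    dropF_liftF hn hp]

lemma delF_insF (hn : 2 ≤ n) {p : ℕ} (hp : p ≤ 2*n - 2) (μ' : Fin (2*(n-1)) → Fin (2*(n-1))) :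
    delF hn (insF hn p hp μ') = μ' := by
  funext y
  have hend : (insF hn p hp μ' (endF hn)).val = p := by
    rw [insF_end hn hp μ' (by simp [endF])]
  simp only [delF, hend]
  rw [insF_liftF hn hp, dropF_liftF hn hp]

/-- `p` is a valid (top-level) insertion position for `μ'`: no link straddles it. -/
def GapAt (p : ℕ) (μ' : Fin (2*(n-1)) → Fin (2*(n-1))) : Prop :=
  ∀ y : Fin (2*(n-1)), y.val < p → p ≤ (μ' y).val → False

lemma insF_pattern (hn : 2 ≤ n) {p : ℕ} (hp : p ≤ 2*n - 2)
    {μ' : Fin (2*(n-1)) → Fin (2*(n-1))} (hμ : IsLinkPattern (n-1) μ')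
    (hgap : GapAt p μ') : IsLinkPattern n (insF hn p hp μ') := by
  obtain ⟨hinv, hffp, hnc⟩ := hμ
  set μ := insF hn p hp μ' with hμdef
  have hend : (endF hn : Fin (2*n)).val = 2*n - 1 := rfl
  have ip : ∀ x : Fin (2*n), x.val = p → μ x = endF hn :=
    fun x h => insF_p hn hp μ' h
  have ie : ∀ x : Fin (2*n), x.val = 2*n - 1 → μ x = ⟨p, by omega⟩ :=
    fun x h => insF_end hn hp μ' h
  have happ : ∀ x : Fin (2*n), x.val ≠ p → x.val ≠ 2*n - 1 →
      μ x = liftF p (μ' (dropF hn p x)) := fun x h1 h2 => insF_other hn hp μ' h1 h2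
  have hlift : ∀ y : Fin (2*(n-1)), μ (liftF p y) = liftF p (μ' y) :=
    fun y => insF_liftF hn hp μ' y
  have hinv2 : ∀ i, μ (μ i) = i := by
    intro x
    by_cases h1 : x.val = p
    · rw [ip x h1, ie _ hend]
      exact Fin.ext h1.symm
    by_cases h2 : x.val = 2*n - 1
    · rw [ie x h2, ip _ rfl]
      exact Fin.ext h2.symm
    · rw [happ x h1 h2, hlift, hinv, liftF_dropF hn hp x h1 h2]
  refine ⟨hinv2, ?_, ?_⟩
  · intro x hx
    by_cases h1 : x.val = p
    · rw [ip x h1] at hx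
      have := congrArg Fin.val hx
      rw [hend] at this; omega
    by_cases h2 : x.val = 2*n - 1
    · rw [ie x h2] at hx
      have := congrArg Fin.val hx
      simp at this; omega
    · rw [happ x h1 h2] at hx
      have := congrArg (dropF hn p) hx
      rw [dropF_liftF hn hp] at this
      exact hffp _ (this.trans (Fin.ext rfl))
  · intro a b c d hab hbc hcd hac hbd
    rw [Fin.lt_def] at hab hbc hcd
    have hdlt := d.isLt
    by_cases hd : d.val = 2*n - 1
    · -- then μ b = d forces b = p
      have hbp : b.val = p := by
        by_contra hbp
        have hb2 : b.val ≠ 2*n - 1 := by omega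
        rw [happ b hbp hb2] at hbd
        have := congrArg Fin.val hbd
        rw [hd] at this
        have := liftF_le (p := p) (μ' (dropF hn p b))
        omega
      -- a < p < c < 2n-1, μ a = c : straddling link, contradicts gap
      have hap : a.val ≠ p := by omega
      have ha2 : a.val ≠ 2*n - 1 := by omega
      rw [happ a hap ha2] at hac
      have hc2 : c.val < 2*n - 1 := by omega
      have hcp : p < c.val := by omega
      have hcval := congrArg Fin.val hac
      set y := dropF hn p a with hy
      have hya : y.val = a.val := dropF_val_lt hn (by omega) hp
      have : ¬ (μ' y).val < p := by
        intro hlt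
        rw [liftF_val_lt hlt] at hcval
        omega
      exact hgap y (by omega) (by omega)
    · -- none of a b c d is p or end
      have hbp : b.val ≠ p := by
        intro hbp
        rw [ip b hbp] at hbd
        have := congrArg Fin.val hbd; rw [hend] at this; omega
      have hap : a.val ≠ p := by
        intro hap
        rw [ip a hap] at hac
        have := congrArg Fin.val hac; rw [hend] at this; omega
      have hdp : d.val ≠ p := by
        intro hdp
        have h2 : μ d = b := by rw [← hbd, hinv2]
        rw [ip d hdp] at h2
        have := congrArg Fin.val h2; rw [hend] at this; omega
      have hcp : c.val ≠ p := by
        intro hcp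
        have h2 : μ c = a := by rw [← hac, hinv2]
        rw [ip c hcp] at h2
        have := congrArg Fin.val h2; rw [hend] at this; omega
      rw [happ a hap (by omega)] at hac
      rw [happ b hbp (by omega)] at hbd
      have h1 : μ' (dropF hn p a) = dropF hn p c := by
        have := congrArg (dropF hn p) hac
        rwa [dropF_liftF hn hp] at this
      have h2 : μ' (dropF hn p b) = dropF hn p d := by
        have := congrArg (dropF hn p) hbd
        rwa [dropF_liftF hn hp] at this
      have hmono : ∀ u v : Fin (2*n), u.val < v.val → u.val ≠ p → v.val ≠ p →
          v.val ≤ 2*n - 2 → (dropF hn p u) < (dropF hn p v) := by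
        intro u v huv hu hv hvb
        rw [Fin.lt_def]
        by_cases h : u.val < p
        · rw [dropF_val_lt hn h hp]
          by_cases h' : v.val < p
          · rw [dropF_val_lt hn h' hp]; omega
          · rw [dropF_val_ge hn h' hvb]; omega
        · rw [dropF_val_ge hn h (by omega), dropF_val_ge hn (by omega) hvb]; omega
      exact hnc _ _ _ _ (hmono a b (by omega) hap hbp (by omega))
        (hmono b c (by omega) hbp hcp (by omega))
        (hmono c d (by omega) hcp hdp (by omega)) h1 h2

section Del
variable (hn : 2 ≤ n) {μ : Fin (2*n) → Fin (2*n)} (hμ : IsLinkPattern n μ)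
include hμ

lemma P_le : (μ (endF hn)).val ≤ 2*n - 2 := by
  have h1 := hμ.2.1 (endF hn)
  have h2 := (μ (endF hn)).isLt
  have : (μ (endF hn)).val ≠ (endF hn).val := fun h => h1 (Fin.ext h)
  have he : (endF hn).val = 2*n - 1 := rfl
  omega

lemma mu_P : μ ⟨(μ (endF hn)).val, (μ (endF hn)).isLt⟩ = endF hn := by
  have : (⟨(μ (endF hn)).val, (μ (endF hn)).isLt⟩ : Fin (2*n)) = μ (endF hn) := rfl
  rw [this, hμ.1]

lemma straddleP : ∀ x : Fin (2*n), x.val < (μ (endF hn)).val → (μ x).val < (μ (endF hn)).val := by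
  intro x hx
  set P := (μ (endF hn)).val with hP
  by_contra hge
  push_neg at hge
  -- μ x ≠ P (else x = end, too big), μ x ≠ end (else x has val P)
  have hxe : (μ x).val ≠ 2*n - 1 := by
    intro h
    have : μ x = endF hn := Fin.ext h
    have h6 : x = μ (endF hn) := by rw [← this, hμ.1]
    have h7 : x.val = P := congrArg Fin.val h6
    omega
  have hxp : (μ x).val ≠ P := by
    intro h
    have hPP := mu_P hn hμ
    have : μ x = ⟨P, (μ (endF hn)).isLt⟩ := Fin.ext h
    have h3 : μ (μ x) = endF hn := by rw [this, hPP]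
    rw [hμ.1] at h3
    have := congrArg Fin.val h3
    have he : (endF hn).val = 2*n - 1 := rfl
    have := x.isLt
    omega
  have hPlt : P < 2*n := (μ (endF hn)).isLt
  -- quadruple x < P < μ x < end
  exact hμ.2.2 x ⟨P, by omega⟩ (μ x) (endF hn)
    (by rw [Fin.lt_def]; exact hx)
    (by rw [Fin.lt_def]; simp; omega)
    (by rw [Fin.lt_def]; have := (μ x).isLt; have : (endF hn).val = 2*n-1 := rfl; simp [this]; omega)
    rfl (mu_P hn hμ)

lemma mu_lift_del : ∀ y : Fin (2*(n-1)),
    μ (liftF (μ (endF hn)).val y) = liftF (μ (endF hn)).val (delF hn μ y) := by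
  intro y
  set P := (μ (endF hn)).val with hP
  have hPle : P ≤ 2*n - 2 := P_le hn hμ
  have h1 : (liftF P y : Fin (2*n)).val ≠ P := liftF_ne_p y
  have h2 : (liftF P y : Fin (2*n)).val ≤ 2*n - 2 := liftF_le y
  -- μ (liftF P y) is neither P nor end
  have h3 : (μ (liftF P y)).val ≠ 2*n - 1 := by
    intro h
    have : μ (liftF P y) = endF hn := Fin.ext h
    have h4 : liftF P y = μ (endF hn) := by rw [← this, hμ.1]
    have := congrArg Fin.val h4
    exact h1 this
  have h4 : (μ (liftF P y)).val ≠ P := by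
    intro h
    have e1 : μ (liftF P y) = μ (endF hn) := Fin.ext h
    have e2 : liftF P y = endF hn := by
      have := congrArg μ e1
      rwa [hμ.1, hμ.1] at this
    have e3 : (liftF P y : Fin (2*n)).val = 2*n - 1 := congrArg Fin.val e2
    omega
  rw [delF]
  rw [liftF_dropF hn hPle _ h4 h3]

lemma gap_delP : GapAt (μ (endF hn)).val (delF hn μ) := by
  intro y hy hge
  have hPle : (μ (endF hn)).val ≤ 2*n - 2 := P_le hn hμ
  have hyl : (liftF (μ (endF hn)).val y : Fin (2*n)).val = y.val := liftF_val_lt hy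
  have hstr := straddleP hn hμ (liftF (μ (endF hn)).val y) (by omega)
  have h2 : (μ (liftF (μ (endF hn)).val y)).val
      = (liftF (μ (endF hn)).val (delF hn μ y) : Fin (2*n)).val :=
    congrArg Fin.val (mu_lift_del hn hμ y)
  have h3 : (liftF (μ (endF hn)).val (delF hn μ y) : Fin (2*n)).val = (delF hn μ y).val + 1 :=
    liftF_val_ge (by omega)
  omega

lemma delF_pattern : IsLinkPattern (n-1) (delF hn μ) := by
  set P := (μ (endF hn)).val with hP
  have hPle : P ≤ 2*n - 2 := P_le hn hμ
  have hld := mu_lift_del hn hμ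
  have hinv : ∀ y, delF hn μ (delF hn μ y) = y := by
    intro y
    have h1 : μ (liftF P (delF hn μ y)) = liftF P y := by
      rw [← hld y, hμ.1]
    have h2 := hld (delF hn μ y)
    rw [h1] at h2
    have := congrArg (dropF hn P) h2
    rw [dropF_liftF hn hPle, dropF_liftF hn hPle] at this
    exact this.symm
  refine ⟨hinv, ?_, ?_⟩
  · intro y h
    have := hld y
    rw [h] at this
    exact hμ.2.1 _ this
  · intro a b c d hab hbc hcd hac hbd
    refine hμ.2.2 (liftF P a) (liftF P b) (liftF P c) (liftF P d)
      ((liftF_lt_iff a b).2 hab) ((liftF_lt_iff b c).2 hbc) ((liftF_lt_iff c d).2 hcd) ?_ ?_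
    · rw [hld a, hac]
    · rw [hld b, hbd]

lemma insF_delF : insF hn (μ (endF hn)).val (P_le hn hμ) (delF hn μ) = μ := by
  set P := (μ (endF hn)).val with hP
  have hPle : P ≤ 2*n - 2 := P_le hn hμ
  funext x
  by_cases h1 : x.val = P
  · rw [insF_p hn hPle _ h1]
    have : x = (⟨P, (μ (endF hn)).isLt⟩ : Fin (2*n)) := Fin.ext h1
    rw [this, mu_P hn hμ]
  by_cases h2 : x.val = 2*n - 1
  · rw [insF_end hn hPle _ h2]
    have h3 : x = endF hn := Fin.ext h2
    rw [h3]
  · rw [insF_other hn hPle _ h1 h2]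
    have h3 := mu_lift_del hn hμ (dropF hn P x)
    rw [liftF_dropF hn hPle x h1 h2] at h3
    exact h3.symm

end Del

instance outDec (n : ℕ) (μ : Fin (2*n) → Fin (2*n)) : DecidablePred (Out n μ) := fun a => by
  unfold Out
  infer_instance

lemma nat_card_subtype {α : Type*} [Fintype α] (P : α → Prop) [DecidablePred P] :
    Nat.card {x // P x} = (Finset.univ.filter P).card := by
  rw [Nat.card_eq_fintype_card, Fintype.card_subtype]

lemma liftF_inj {p : ℕ} : Function.Injective (liftF p : Fin (2*(n-1)) → Fin (2*n)) := by
  intro y z h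
  have hv := congrArg Fin.val h
  apply Fin.ext
  by_cases h1 : y.val < p <;> by_cases h2 : z.val < p
  · rw [liftF_val_lt h1, liftF_val_lt h2] at hv; exact hv
  · rw [liftF_val_lt h1, liftF_val_ge h2] at hv; omega
  · rw [liftF_val_ge h1, liftF_val_lt h2] at hv; omega
  · rw [liftF_val_ge h1, liftF_val_ge h2] at hv; omega

section Ins
variable (hn : 2 ≤ n) {p : ℕ} (hp : p ≤ 2*n - 2)
  {μ' : Fin (2*(n-1)) → Fin (2*(n-1))} (hμ' : IsLinkPattern (n-1) μ') (hgap : GapAt p μ')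
include hμ' hgap

lemma exposure_insF :
    exposure n (insF hn p hp μ') =
    (Finset.univ.filter
      (fun y : Fin (2*(n-1)) => Out (n-1) μ' y ∧ y.val < p)).card + 1 := by
  classical
  obtain ⟨hinv, hffp, hnc⟩ := hμ'
  set μ := insF hn p hp μ' with hμdef
  have hend : (endF hn : Fin (2*n)).val = 2*n - 1 := rfl
  have ip : ∀ x : Fin (2*n), x.val = p → μ x = endF hn :=
    fun x h => insF_p hn hp μ' h
  have ie : ∀ x : Fin (2*n), x.val = 2*n - 1 → μ x = ⟨p, by omega⟩ :=
    fun x h => insF_end hn hp μ' h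
  have io : ∀ x : Fin (2*n), x.val ≠ p → x.val ≠ 2*n - 1 →
      μ x = liftF p (μ' (dropF hn p x)) := fun x h1 h2 => insF_other hn hp μ' h1 h2
  have hlift : ∀ y : Fin (2*(n-1)), μ (liftF p y) = liftF p (μ' y) :=
    fun y => insF_liftF hn hp μ' y
  -- C1 : the new link is outermost
  have C1 : Out n μ ⟨p, by omega⟩ := by
    constructor
    · rw [ip _ rfl, Fin.lt_def, hend]; simp; omega
    · intro c d hc hd
      rw [ip _ rfl, Fin.lt_def, hend] at hd
      have := d.isLt
      omega
  -- C2 : links left of p are outermost iff they were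
  have C2 : ∀ y : Fin (2*(n-1)), y.val < p → (Out n μ (liftF p y) ↔ Out (n-1) μ' y) := by
    intro y hy
    have hxv : (liftF p y : Fin (2*n)).val = y.val := liftF_val_lt hy
    constructor
    · rintro ⟨h1, h2⟩
      by_cases hc : (μ' y).val < p
      · constructor
        · rw [Fin.lt_def]
          rw [Fin.lt_def, hxv, hlift, liftF_val_lt hc] at h1
          exact h1
        · intro c d hcy hdy hcd
          have hcp : c.val < p := by
            rw [Fin.lt_def] at hcy; omega
          refine h2 (liftF p c) (liftF p d) ?_ ?_ ?_
          · rw [Fin.lt_def, hxv, liftF_val_lt hcp]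
            rw [Fin.lt_def] at hcy; exact hcy
          · rw [hlift]
            exact (liftF_lt_iff _ _).2 hdy
          · rw [hlift, hcd]
      · exact absurd (hgap y hy (by omega)) id
    · rintro ⟨h1, h2⟩
      have hc : (μ' y).val ≥ y.val + 1 := by
        rw [Fin.lt_def] at h1; omega
      constructor
      · rw [Fin.lt_def, hxv, hlift]
        by_cases hpc : (μ' y).val < p
        · rw [liftF_val_lt hpc]; omega
        · rw [liftF_val_ge hpc]; omega
      · intro c d hcx hdx hcd
        have hcv : c.val < p := by rw [Fin.lt_def, hxv] at hcx; omega
        have hcnp : c.val ≠ p := by omega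
        have hcne : c.val ≠ 2*n - 1 := by omega
        rw [io c hcnp hcne] at hcd
        set c₀ := dropF hn p c with hc₀
        have hc₀v : c₀.val = c.val := dropF_val_lt hn hcv hp
        have hdform : d = liftF p (μ' c₀) := hcd.symm
        refine h2 c₀ (μ' c₀) ?_ ?_ rfl
        · rw [Fin.lt_def, hc₀v]
          rw [Fin.lt_def, hxv] at hcx; exact hcx
        · rw [hlift] at hdx
          rw [hdform] at hdx
          exact (liftF_lt_iff _ _).1 hdx
  -- C3 : there are no other outermost links
  have C3 : ∀ x : Fin (2*n), Out n μ x → x.val ≠ p → x.val < p := by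
    intro x hOx hxp
    by_contra hge
    push_neg at hge
    by_cases hxe : x.val = 2*n - 1
    · have := hOx.1
      rw [Fin.lt_def, ie x hxe] at this
      simp at this
      omega
    · have hgt : p < x.val := by omega
      refine hOx.2 ⟨p, by omega⟩ (endF hn) ?_ ?_ ?_
      · rw [Fin.lt_def]; exact hgt
      · rw [Fin.lt_def, io x hxp hxe, hend]
        have := liftF_le (p := p) (μ' (dropF hn p x))
        omega
      · exact ip _ rfl
  -- now count
  rw [exposure_eqic, nat_card_subtype]
  have hset : Finset.univ.filter (Out n μ) =
      insert (⟨p, by omega⟩ : Fin (2*n))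
        ((Finset.univ.filter
          (fun y : Fin (2*(n-1)) => Out (n-1) μ' y ∧ y.val < p)).image (liftF p)) := by
    ext x
    simp only [Finset.mem_filter, Finset.mem_univ, true_and, Finset.mem_insert,
      Finset.mem_image]
    constructor
    · intro hOx
      by_cases hxp : x.val = p
      · exact Or.inl (Fin.ext hxp)
      · right
        have hlt := C3 x hOx hxp
        refine ⟨⟨x.val, by omega⟩, ⟨?_, hlt⟩, ?_⟩
        · have hx : liftF p (⟨x.val, by omega⟩ : Fin (2*(n-1))) = x :=
            Fin.ext (liftF_val_lt hlt)
          rw [← hx] at hOx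
          exact (C2 _ hlt).1 hOx
        · exact Fin.ext (liftF_val_lt hlt)
    · rintro (rfl | ⟨y, ⟨hOy, hyp⟩, rfl⟩)
      · exact C1
      · exact (C2 y hyp).2 hOy
  rw [hset, Finset.card_insert_of_notMem, Finset.card_image_of_injective _ liftF_inj]
  intro hmem
  rw [Finset.mem_image] at hmem
  obtain ⟨y, hy, hyy⟩ := hmem
  have := congrArg Fin.val hyy
  exact liftF_ne_p y this

end Ins

lemma exposure_filter (m : ℕ) (μ : Fin (2*m) → Fin (2*m)) :
    exposure m μ = (Finset.univ.filter (Out m μ)).card := by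
  rw [exposure_eqic, nat_card_subtype]

lemma out_zero {m : ℕ} (hm : 1 ≤ m) {μ : Fin (2*m) → Fin (2*m)}
    (hμ : IsLinkPattern m μ) : Out m μ ⟨0, by omega⟩ := by
  constructor
  · rw [Fin.lt_def]
    have := hμ.2.1 ⟨0, by omega⟩
    have h2 : (μ ⟨0, by omega⟩).val ≠ 0 := by
      intro h; exact this (Fin.ext h)
    simp; omega
  · intro c d hc _ _
    rw [Fin.lt_def] at hc
    simp at hc

lemma starts_card {m : ℕ} {μ : Fin (2*m) → Fin (2*m)} (hμ : IsLinkPattern m μ) :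
    (Finset.univ.filter (fun a : Fin (2*m) => a < μ a)).card = m := by
  classical
  have hbij : (Finset.univ.filter (fun a : Fin (2*m) => a < μ a)).card
      = (Finset.univ.filter (fun a : Fin (2*m) => μ a < a)).card := by
    apply Finset.card_bij (fun a _ => μ a)
    · intro a ha
      simp only [Finset.mem_filter, Finset.mem_univ, true_and] at ha ⊢
      rw [hμ.1]; exact ha
    · intro a ha b hb hab
      have := congrArg μ hab
      rwa [hμ.1, hμ.1] at this
    · intro b hb
      simp only [Finset.mem_filter, Finset.mem_univ, true_and] at hb ⊢
      exact ⟨μ b, by rw [hμ.1]; exact hb, hμ.1 b⟩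
  have hneg : (Finset.univ.filter (fun a : Fin (2*m) => ¬ a < μ a)).card
      = (Finset.univ.filter (fun a : Fin (2*m) => μ a < a)).card := by
    congr 1
    apply Finset.filter_congr
    intro a _
    have := hμ.2.1 a
    constructor
    · intro h; exact lt_of_le_of_ne (not_lt.1 h) (by intro hh; exact this hh)
    · intro h; exact not_lt.2 (le_of_lt h)
  have htot := Finset.card_filter_add_card_filter_not
    (s := (Finset.univ : Finset (Fin (2*m)))) (fun a : Fin (2*m) => a < μ a)
  rw [hneg, ← hbij] at htot
  simp only [Finset.card_univ, Fintype.card_fin] at htot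
  omega

lemma out_card_le {m : ℕ} {μ : Fin (2*m) → Fin (2*m)} (hμ : IsLinkPattern m μ) :
    (Finset.univ.filter (Out m μ)).card ≤ m := by
  classical
  have hsub : Finset.univ.filter (Out m μ)
      ⊆ Finset.univ.filter (fun a : Fin (2*m) => a < μ a) := by
    intro a ha
    simp only [Finset.mem_filter, Finset.mem_univ, true_and] at ha ⊢
    exact ha.1
  have h2 := Finset.card_le_card hsub
  rwa [starts_card hμ] at h2

/-- the start of an outermost link of the parent is a valid insertion position. -/
lemma out_gap (hn : 2 ≤ n) {μ' : Fin (2*(n-1)) → Fin (2*(n-1))}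
    (hμ' : IsLinkPattern (n-1) μ') {a : Fin (2*(n-1))} (ha : Out (n-1) μ' a) :
    GapAt a.val μ' := by
  intro y hy hge
  have hza : (μ' y).val ≠ a.val := by
    intro h
    have : μ' y = a := Fin.ext h
    have h2 : y = μ' a := by rw [← this, hμ'.1]
    have h3 := ha.1
    rw [← h2, Fin.lt_def] at h3
    omega
  have hq := ha.1
  rw [Fin.lt_def] at hq
  have hzq : (μ' y).val ≠ (μ' a).val := by
    intro h
    have : μ' y = μ' a := Fin.ext h
    have := congrArg μ' this
    rw [hμ'.1, hμ'.1] at this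
    rw [this] at hy
    omega
  by_cases hcmp : (μ' y).val < (μ' a).val
  · exact hμ'.2.2 y a (μ' y) (μ' a) (by rw [Fin.lt_def]; omega)
      (by rw [Fin.lt_def]; omega) (by rw [Fin.lt_def]; omega) rfl rfl
  · exact ha.2 y (μ' y) (by rw [Fin.lt_def]; omega) (by rw [Fin.lt_def]; omega) rfl

set_option maxHeartbeats 1000000 in
/-- if the final link does not start at the penultimate point, its start position is an
outermost link start of the parent. -/
lemma out_del_P (hn : 2 ≤ n) {μ : Fin (2*n) → Fin (2*n)} (hμ : IsLinkPattern n μ)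
    (hPlt : (μ (endF hn)).val < 2*n - 2) :
    Out (n-1) (delF hn μ) ⟨(μ (endF hn)).val, by omega⟩ := by
  have hPle : (μ (endF hn)).val ≤ 2*n - 2 := P_le hn hμ
  set ν := delF hn μ with hν
  have hx1 : (liftF (μ (endF hn)).val (⟨(μ (endF hn)).val, by omega⟩ : Fin (2*(n-1))) : Fin (2*n))
      = ⟨(μ (endF hn)).val + 1, by omega⟩ := by
    apply Fin.ext
    rw [liftF_val_ge (by simp)]
  set x1 : Fin (2*n) := ⟨(μ (endF hn)).val + 1, by omega⟩ with hx1def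
  set z := μ x1 with hz
  have hzne : z.val ≠ 2*n - 1 := by
    intro h
    have : z = endF hn := Fin.ext h
    have h2 : x1 = μ (endF hn) := by rw [← this, hz, hμ.1]
    have := congrArg Fin.val h2
    simp [hx1def] at this
  have hznP : z.val ≠ (μ (endF hn)).val := by
    intro h
    have : z = μ (endF hn) := Fin.ext h
    have h2 : μ z = endF hn := by rw [this, hμ.1]
    rw [hz, hμ.1] at h2
    have := congrArg Fin.val h2
    simp [hx1def] at this
    have he : (endF hn).val = 2*n-1 := rfl
    omega
  have hzgt : (μ (endF hn)).val < z.val := by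
    by_contra hlt
    push_neg at hlt
    have : z.val < (μ (endF hn)).val := by omega
    have := straddleP hn hμ z this
    rw [hz, hμ.1] at this
    simp [hx1def] at this
  have hznx1 : z.val ≠ x1.val := by
    intro h
    exact hμ.2.1 x1 (Fin.ext h)
  have hzge2 : (μ (endF hn)).val + 2 ≤ z.val := by
    simp only [hx1def] at hznx1
    omega
  have hνP : (ν ⟨(μ (endF hn)).val, by omega⟩).val = z.val - 1 := by
    rw [hν, delF, hx1]
    exact dropF_val_ge hn (by omega) (by omega)
  constructor
  · rw [Fin.lt_def, hνP]
    simp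
    omega
  · intro c d hc hd hcd
    rw [Fin.lt_def] at hc hd
    simp only at hc
    rw [hνP] at hd
    -- child quadruple : (liftF c, P-point, liftF d, end)
    have hcl : (liftF (μ (endF hn)).val c : Fin (2*n)).val = c.val := liftF_val_lt hc
    have hdl : (liftF (μ (endF hn)).val d : Fin (2*n)).val = d.val + 1 :=
      liftF_val_ge (by omega)
    have hmuc : μ (liftF (μ (endF hn)).val c) = liftF (μ (endF hn)).val d := by
      rw [mu_lift_del hn hμ]
      exact congrArg (liftF (μ (endF hn)).val) hcd
    refine hμ.2.2 (liftF (μ (endF hn)).val c) ⟨(μ (endF hn)).val, (μ (endF hn)).isLt⟩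
      (liftF (μ (endF hn)).val d) (endF hn) ?_ ?_ ?_ hmuc (mu_P hn hμ)
    · rw [Fin.lt_def, hcl]; exact hc
    · rw [Fin.lt_def, hdl]; simp; omega
    · rw [Fin.lt_def, hdl]
      have := d.isLt
      have he : (endF hn).val = 2*n-1 := rfl
      rw [he]; omega

lemma exists_nth {α : Type*} [LinearOrder α] :
    ∀ (i : ℕ) (s : Finset α), i < s.card →
      ∃ x ∈ s, (s.filter (fun y => y < x)).card = i := by
  classical
  intro i
  induction i with
  | zero =>
    intro s hs
    have hne : s.Nonempty := Finset.card_pos.1 (by omega)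
    refine ⟨s.min' hne, Finset.min'_mem s hne, ?_⟩
    rw [Finset.card_eq_zero, Finset.filter_eq_empty_iff]
    intro y hy
    exact not_lt.2 (Finset.min'_le s y hy)
  | succ i ih =>
    intro s hs
    have hne : s.Nonempty := Finset.card_pos.1 (by omega)
    have hm : s.min' hne ∈ s := Finset.min'_mem s hne
    have hcard : (s.erase (s.min' hne)).card = s.card - 1 := Finset.card_erase_of_mem hm
    obtain ⟨x, hx, hxc⟩ := ih (s.erase (s.min' hne)) (by omega)
    have hxs : x ∈ s := Finset.mem_of_mem_erase hx
    have hxm : s.min' hne < x :=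
      lt_of_le_of_ne (Finset.min'_le s x hxs) (fun h => (Finset.ne_of_mem_erase hx) h.symm)
    refine ⟨x, hxs, ?_⟩
    have hsplit : s.filter (fun y => y < x)
        = insert (s.min' hne) ((s.erase (s.min' hne)).filter (fun y => y < x)) := by
      ext y
      simp only [Finset.mem_filter, Finset.mem_insert, Finset.mem_erase]
      constructor
      · rintro ⟨hys, hyx⟩
        by_cases h : y = s.min' hne
        · exact Or.inl h
        · exact Or.inr ⟨⟨h, hys⟩, hyx⟩
      · rintro (rfl | ⟨⟨_, hys⟩, hyx⟩)
        · exact ⟨hm, hxm⟩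
        · exact ⟨hys, hyx⟩
    rw [hsplit, Finset.card_insert_of_notMem, hxc]
    simp only [Finset.mem_filter, Finset.mem_erase]
    rintro ⟨⟨h, _⟩, _⟩
    exact h rfl

lemma insF_congr (hn : 2 ≤ n) {p q : ℕ} (hpq : p = q) (hp : p ≤ 2*n-2) (hq : q ≤ 2*n-2)
    (μ' : Fin (2*(n-1)) → Fin (2*(n-1))) : insF hn p hp μ' = insF hn q hq μ' := by
  subst hpq; rfl

lemma nat_card_sigma {ι : Type*} [Fintype ι] (f : ι → Type*) [∀ i, Finite (f i)] :
    Nat.card ((i : ι) × f i) = ∑ i, Nat.card (f i) := by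
  letI : ∀ i, Fintype (f i) := fun i => Fintype.ofFinite _
  rw [Nat.card_eq_fintype_card, Fintype.card_sigma]
  exact Finset.sum_congr rfl fun i _ => (Nat.card_eq_fintype_card).symm

end LPx

open LPx

/-- The exposure-number statistics satisfy the Catalan-tree succession rule
`(k) → (2)(3)⋯(k+1)`: for `n ≥ 2` and `1 ≤ j ≤ n`,
`a(n, j) = Σ_{k = max(1, j-1)}^{n-1} a(n-1, k)`. -/
theorem exposureCount_succession (n j : ℕ) (hn : 2 ≤ n) (hj1 : 1 ≤ j) (hjn : j ≤ n) :
    exposureCount n j = ∑ k ∈ Finset.Icc (max 1 (j - 1)) (n - 1), exposureCount (n - 1) k := by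
  classical
  set S := ((k : {x // x ∈ Finset.Icc (max 1 (j - 1)) (n - 1)}) ×
    {μ' : Fin (2*(n-1)) → Fin (2*(n-1)) //
      IsLinkPattern (n-1) μ' ∧ exposure (n-1) μ' = k.val}) with hS
  -- the count of non-new outermost links of a pattern with exposure j is j - 1
  have key : ∀ (μ : Fin (2*n) → Fin (2*n)), IsLinkPattern n μ → exposure n μ = j →
      (Finset.univ.filter (fun y : Fin (2*(n-1)) =>
        Out (n-1) (delF hn μ) y ∧ y.val < (μ (endF hn)).val)).card = j - 1 := by
    intro μ hμ he
    have h1 := exposure_insF hn (P_le hn hμ) (delF_pattern hn hμ) (gap_delP hn hμ)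
    rw [insF_delF hn hμ] at h1
    omega
  have memIcc : ∀ (μ : Fin (2*n) → Fin (2*n)), IsLinkPattern n μ → exposure n μ = j →
      exposure (n-1) (delF hn μ) ∈ Finset.Icc (max 1 (j - 1)) (n - 1) := by
    intro μ hμ he
    rw [Finset.mem_Icc, exposure_filter]
    have hj' := key μ hμ he
    refine ⟨max_le ?_ ?_, out_card_le (delF_pattern hn hμ)⟩
    · rw [Nat.one_le_iff_ne_zero, ← Nat.pos_iff_ne_zero, Finset.card_pos]
      exact ⟨⟨0, by omega⟩, by
        simp only [Finset.mem_filter, Finset.mem_univ, true_and]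
        exact out_zero (by omega) (delF_pattern hn hμ)⟩
    · rw [← hj']
      apply Finset.card_le_card
      intro y hy
      simp only [Finset.mem_filter, Finset.mem_univ, true_and] at hy ⊢
      exact hy.1
  -- the bijection
  set F : {μ : Fin (2*n) → Fin (2*n) // IsLinkPattern n μ ∧ exposure n μ = j} → S :=
    fun μ => ⟨⟨exposure (n-1) (delF hn μ.val), memIcc μ.val μ.2.1 μ.2.2⟩,
      ⟨delF hn μ.val, delF_pattern hn μ.2.1, rfl⟩⟩ with hF
  have sigma_ext : ∀ x y : S, x.1.val = y.1.val →
      (x.2.val : Fin (2*(n-1)) → Fin (2*(n-1))) = y.2.val → x = y := by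
    rintro ⟨⟨k1, hk1⟩, ⟨f1, hf1⟩⟩ ⟨⟨k2, hk2⟩, ⟨f2, hf2⟩⟩ h1 h2
    simp only at h1 h2
    subst h1
    subst h2
    rfl
  have hinj : Function.Injective F := by
    intro μ1 μ2 h
    have hdel : delF hn μ1.val = delF hn μ2.val :=
      congrArg (fun x : S => (x.2.val : Fin (2*(n-1)) → Fin (2*(n-1)))) h
    -- the two insertion positions agree
    have auxlt : ∀ (μa μb : Fin (2*n) → Fin (2*n)),
        IsLinkPattern n μa → IsLinkPattern n μb → exposure n μa = j → exposure n μb = j →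
        delF hn μa = delF hn μb →
        (μa (endF hn)).val < (μb (endF hn)).val → False := by
      intro μa μb hpa hpb hea heb hdeleq hlt
      have hca := key μa hpa hea
      have hcb := key μb hpb heb
      rw [← hdeleq] at hcb
      have hPble := P_le hn hpb
      have hPalt : (μa (endF hn)).val < 2*n - 2 := by omega
      have hout := out_del_P hn hpa hPalt
      have hsub : insert (⟨(μa (endF hn)).val, by omega⟩ : Fin (2*(n-1)))
          (Finset.univ.filter (fun y : Fin (2*(n-1)) =>
            Out (n-1) (delF hn μa) y ∧ y.val < (μa (endF hn)).val))
          ⊆ Finset.univ.filter (fun y : Fin (2*(n-1)) =>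
            Out (n-1) (delF hn μa) y ∧ y.val < (μb (endF hn)).val) := by
        intro y hy
        rcases Finset.mem_insert.1 hy with rfl | hy'
        · simp only [Finset.mem_filter, Finset.mem_univ, true_and]
          exact ⟨hout, hlt⟩
        · simp only [Finset.mem_filter, Finset.mem_univ, true_and] at hy' ⊢
          exact ⟨hy'.1, by omega⟩
      have hcard := Finset.card_le_card hsub
      rw [Finset.card_insert_of_notMem (by
        simp only [Finset.mem_filter, Finset.mem_univ, true_and]
        rintro ⟨-, hlt'⟩
        simp at hlt')] at hcard
      omega
    have hPP : (μ1.val (endF hn)).val = (μ2.val (endF hn)).val := by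
      rcases lt_trichotomy (μ1.val (endF hn)).val (μ2.val (endF hn)).val with hlt | heq | hgt
      · exact absurd (auxlt μ1.val μ2.val μ1.2.1 μ2.2.1 μ1.2.2 μ2.2.2 hdel hlt) id
      · exact heq
      · exact absurd (auxlt μ2.val μ1.val μ2.2.1 μ1.2.1 μ2.2.2 μ1.2.2 hdel.symm hgt) id
    apply Subtype.ext
    rw [← insF_delF hn μ1.2.1, ← insF_delF hn μ2.2.1]
    rw [insF_congr hn hPP (P_le hn μ1.2.1) (by rw [← hPP]; exact P_le hn μ1.2.1) (delF hn μ1.val)]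
    rw [hdel]
  have hsurj : Function.Surjective F := by
    rintro ⟨⟨k, hkIcc⟩, ⟨μ', hμ'pat, hμ'exp⟩⟩
    rw [Finset.mem_Icc] at hkIcc
    obtain ⟨hk1, hk2⟩ := hkIcc
    have hk1' : 1 ≤ k := le_trans (le_max_left 1 (j-1)) hk1
    have hkj : j - 1 ≤ k := le_trans (le_max_right 1 (j-1)) hk1
    have hOcard : (Finset.univ.filter (Out (n-1) μ')).card = k := by
      rw [← exposure_filter]; exact hμ'exp
    -- choose the insertion position p
    obtain ⟨p, hp, hgapp, hcnt⟩ :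
        ∃ (p : ℕ) (hp : p ≤ 2*n - 2), GapAt p μ' ∧
          (Finset.univ.filter (fun y : Fin (2*(n-1)) =>
            Out (n-1) μ' y ∧ y.val < p)).card = j - 1 := by
      rcases eq_or_lt_of_le hkj with heqk | hltk
      · -- p = 2n - 2 : wrap nothing
        refine ⟨2*n - 2, le_refl _, ?_, ?_⟩
        · intro y hy hge
          have := (μ' y).isLt
          omega
        · rw [← heqk] at hOcard
          rw [← hOcard]
          congr 1
          apply Finset.filter_congr
          intro y _
          have := y.isLt
          constructor
          · exact fun h => h.1
          · exact fun h => ⟨h, by omega⟩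
      · -- p = the (j-1)-st outermost start
        obtain ⟨x, hxmem, hxcnt⟩ := exists_nth (j-1)
          (Finset.univ.filter (Out (n-1) μ')) (by omega)
        simp only [Finset.mem_filter, Finset.mem_univ, true_and] at hxmem
        refine ⟨x.val, by have := x.isLt; omega, out_gap hn hμ'pat hxmem, ?_⟩
        rw [← hxcnt, Finset.filter_filter]
        congr 1
    refine ⟨⟨insF hn p hp μ', insF_pattern hn hp hμ'pat hgapp, ?_⟩, ?_⟩
    · rw [exposure_insF hn hp hμ'pat hgapp, hcnt]
      omega
    · apply sigma_ext
      · simp only [hF]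
        rw [delF_insF hn hp μ', hμ'exp]
      · simp only [hF]
        exact delF_insF hn hp μ'
  -- count both sides
  have hcards : exposureCount n j = Nat.card S :=
    Nat.card_congr (Equiv.ofBijective F ⟨hinj, hsurj⟩)
  rw [hcards, hS, nat_card_sigma]
  rw [← Finset.sum_coe_sort (Finset.Icc (max 1 (j - 1)) (n - 1)) (fun k => exposureCount (n-1) k)]
  rfl
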